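/- Let T > 0, p ∈ [0, 1/2) and n a positive integer. There exists a constant C > 0, independent of N, such that for every integer N ≥ 2 with h := T/N, and every doubly indexed family (v(k,m))_{0 ≤ k ≤ N-2, m ≥ 1} satisfying 0 ≤ v(k,m) ≤ λ_m^{n-p} h^{n+1} e^{-2 λ_m (T - t_{k+1})} (where t_j := j h), one has Σ_{m≥1} Σ_{k=0}^{N-2} v(k,m) ≤ C h^{p + 1/2}. -/

import Mathlib

noncomputable def lam (m : ℕ) : ℝ := (Real.pi * m) ^ 2 / 2

lemma lam_nonneg (m : ℕ) : 0 ≤ lam m := by unfold lam; positivity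

-- y^n ≤ n! * exp y for y ≥ 0
lemma aux_pow_le_fact_mul_exp (n : ℕ) {y : ℝ} (hy : 0 ≤ y) :
    y ^ n ≤ (n.factorial : ℝ) * Real.exp y := by
  have h1 : y ^ n / (n.factorial : ℝ) ≤ Real.exp y := by
    calc y ^ n / (n.factorial : ℝ)
        ≤ ∑ i ∈ Finset.range (n + 1), y ^ i / i.factorial :=
          Finset.single_le_sum (f := fun i => y ^ i / (i.factorial : ℝ))
            (fun i _ => by positivity) (Finset.self_mem_range_succ n)
      _ ≤ Real.exp y := Real.sum_le_exp_of_nonneg hy _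
  have hf : (0:ℝ) < (n.factorial : ℝ) := by positivity
  calc y ^ n = y ^ n / (n.factorial : ℝ) * (n.factorial : ℝ) := by field_simp
    _ ≤ Real.exp y * (n.factorial : ℝ) := mul_le_mul_of_nonneg_right h1 hf.le
    _ = (n.factorial : ℝ) * Real.exp y := by ring

-- y^a ≤ (n! + 1) * exp y for 0 < a ≤ n, y ≥ 0
lemma aux_rpow_le_K_mul_exp (n : ℕ) {a y : ℝ} (ha : 0 < a) (han : a ≤ n) (hy : 0 ≤ y) :
    y ^ a ≤ ((n.factorial : ℝ) + 1) * Real.exp y := by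
  have hf : (0:ℝ) < (n.factorial : ℝ) := by positivity
  have he : 1 ≤ Real.exp y := Real.one_le_exp hy
  rcases le_or_gt y 1 with h1 | h1
  · have : y ^ a ≤ 1 := Real.rpow_le_one hy h1 ha.le
    nlinarith
  · have h2 : y ^ a ≤ y ^ (n:ℝ) := Real.rpow_le_rpow_of_exponent_le h1.le han
    have h3 : y ^ (n:ℝ) = y ^ n := Real.rpow_natCast y n
    have h4 := aux_pow_le_fact_mul_exp n hy
    nlinarith [Real.exp_pos y]

lemma aux_geom_eq {u : ℝ} : (fun m : ℕ => Real.exp (-(u * (m + 1))))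
      = fun m : ℕ => Real.exp (-u) * Real.exp (-u) ^ m := by
  funext m
  rw [← Real.exp_nat_mul, ← Real.exp_add]
  ring_nf

lemma aux_summable_geom_exp {u : ℝ} (hu : 0 < u) :
    Summable (fun m : ℕ => Real.exp (-(u * (m + 1)))) := by
  have hr0 : (0:ℝ) ≤ Real.exp (-u) := (Real.exp_pos _).le
  have hr1 : Real.exp (-u) < 1 := Real.exp_lt_one_iff.mpr (by linarith)
  rw [aux_geom_eq]
  exact (summable_geometric_of_lt_one hr0 hr1).mul_left _

lemma aux_tsum_geom_exp_le {u : ℝ} (hu : 0 < u) :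
    ∑' m : ℕ, Real.exp (-(u * (m + 1))) ≤ 1 / u := by
  have hr0 : (0:ℝ) ≤ Real.exp (-u) := (Real.exp_pos _).le
  have hr1 : Real.exp (-u) < 1 := Real.exp_lt_one_iff.mpr (by linarith)
  have h2 : 0 < 1 - Real.exp (-u) := by linarith
  rw [aux_geom_eq, tsum_mul_left, tsum_geometric_of_lt_one hr0 hr1,
    ← div_eq_mul_inv]
  rw [div_le_div_iff₀ h2 hu]
  have h3 := Real.add_one_le_exp u
  have h4 : Real.exp (-u) * Real.exp u = 1 := by rw [← Real.exp_add]; simp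
  nlinarith [Real.exp_pos (-u)]

lemma aux_lam_exp_bound {s : ℝ} (hs : 0 < s) (m : ℕ) :
    Real.exp (-(lam (m+1) * s)) ≤
      Real.exp (Real.pi ^ 2 / 2) * Real.exp (-(Real.pi ^ 2 * Real.sqrt s * (m + 1))) := by
  rw [← Real.exp_add]
  apply Real.exp_le_exp.mpr
  have hsq : Real.sqrt s ^ 2 = s := Real.sq_sqrt hs.le
  have hpi := Real.pi_pos
  have key : ((m:ℝ) + 1) ^ 2 * s ≥ 2 * ((m:ℝ) + 1) * Real.sqrt s - 1 := by
    nlinarith [sq_nonneg (((m:ℝ) + 1) * Real.sqrt s - 1)]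
  have hl : lam (m+1) = Real.pi ^ 2 * ((m:ℝ) + 1) ^ 2 / 2 := by
    unfold lam; push_cast; ring
  rw [hl]
  nlinarith [sq_nonneg Real.pi]

lemma aux_summable_exp_lam {s : ℝ} (hs : 0 < s) :
    Summable (fun m : ℕ => Real.exp (-(lam (m+1) * s))) := by
  have hu : 0 < Real.pi ^ 2 * Real.sqrt s := by positivity
  apply Summable.of_nonneg_of_le (fun m => (Real.exp_pos _).le)
    (aux_lam_exp_bound hs)
  exact ((aux_summable_geom_exp hu).mul_left _)

lemma aux_spec_sum {s : ℝ} (hs : 0 < s) :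
    ∑' m : ℕ, Real.exp (-(lam (m+1) * s)) ≤
      (Real.exp (Real.pi ^ 2 / 2) / Real.pi ^ 2) * s ^ (-(1/2) : ℝ) := by
  have hu : 0 < Real.pi ^ 2 * Real.sqrt s := by positivity
  have h1 : ∑' m : ℕ, Real.exp (-(lam (m+1) * s)) ≤
      ∑' m : ℕ, Real.exp (Real.pi ^ 2 / 2) *
        Real.exp (-(Real.pi ^ 2 * Real.sqrt s * (m + 1))) :=
    Summable.tsum_le_tsum (aux_lam_exp_bound hs) (aux_summable_exp_lam hs)
      ((aux_summable_geom_exp hu).mul_left _)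
  rw [tsum_mul_left] at h1
  have h2 := aux_tsum_geom_exp_le hu
  have h3 : s ^ (-(1/2) : ℝ) = (Real.sqrt s)⁻¹ := by
    rw [Real.rpow_neg hs.le, Real.sqrt_eq_rpow]
  calc ∑' m : ℕ, Real.exp (-(lam (m+1) * s))
      ≤ Real.exp (Real.pi ^ 2 / 2) * (1 / (Real.pi ^ 2 * Real.sqrt s)) := by
        refine h1.trans ?_
        exact mul_le_mul_of_nonneg_left h2 (Real.exp_pos _).le
    _ = (Real.exp (Real.pi ^ 2 / 2) / Real.pi ^ 2) * s ^ (-(1/2) : ℝ) := by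
        rw [h3]
        field_simp

lemma aux_key_pt (n : ℕ) {a l s : ℝ} (ha : 0 < a) (han : a ≤ n) (hl : 0 ≤ l) (hs : 0 < s) :
    l ^ a * Real.exp (-2 * l * s) ≤
      ((n.factorial : ℝ) + 1) * s ^ (-a) * Real.exp (-(l * s)) := by
  have h1 := aux_rpow_le_K_mul_exp n ha han (show (0:ℝ) ≤ l * s by positivity)
  rw [Real.mul_rpow hl hs.le] at h1
  have hsa : 0 < s ^ a := Real.rpow_pos_of_pos hs a
  have hna : s ^ (-a) = (s ^ a)⁻¹ := Real.rpow_neg hs.le a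
  rw [hna]
  calc l ^ a * Real.exp (-2 * l * s)
      = (l ^ a * s ^ a) * ((s ^ a)⁻¹ * Real.exp (-2 * l * s)) := by field_simp
    _ ≤ (((n.factorial : ℝ) + 1) * Real.exp (l * s)) *
          ((s ^ a)⁻¹ * Real.exp (-2 * l * s)) := by
        apply mul_le_mul_of_nonneg_right h1
        positivity
    _ = ((n.factorial : ℝ) + 1) * (s ^ a)⁻¹ *
          (Real.exp (l * s) * Real.exp (-2 * l * s)) := by ring
    _ = ((n.factorial : ℝ) + 1) * (s ^ a)⁻¹ * Real.exp (-(l * s)) := by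
        rw [← Real.exp_add]
        ring_nf

lemma aux_summable_Z {q : ℝ} (hq : 1 < q) :
    Summable (fun j : ℕ => ((j:ℝ) + 1) ^ (-q)) := by
  have h1 : Summable (fun m : ℕ => (m:ℝ) ^ (-q)) :=
    Real.summable_nat_rpow.mpr (by linarith)
  have h2 := h1.comp_injective (add_left_injective 1)
  have h3 : (fun j : ℕ => ((j:ℝ) + 1) ^ (-q))
      = (fun m : ℕ => (m:ℝ) ^ (-q)) ∘ (· + 1) := by
    funext j
    simp only [Function.comp_apply]
    push_cast
    ring_nf
  rw [h3]
  exact h2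

/-- Lemma 3.8: summation of dominated double-indexed families over the time
grid and the spectrum. -/
theorem stmt_7 (T : ℝ) (hT : 0 < T) (p : ℝ) (hp0 : 0 ≤ p) (hp : p < 1 / 2)
    (n : ℕ) (hn : 0 < n) :
    ∃ C : ℝ, 0 < C ∧ ∀ N : ℕ, 2 ≤ N → ∀ v : ℕ → ℕ → ℝ,
      (∀ k : ℕ, k ≤ N - 2 → ∀ m : ℕ, 1 ≤ m →
        0 ≤ v k m ∧
        v k m ≤ lam m ^ ((n : ℝ) - p) * (T / N) ^ (n + 1) *
          Real.exp (-2 * lam m * (T - (k + 1) * (T / N)))) →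
      ∑' m : ℕ, ∑ k ∈ Finset.range (N - 1), v k (m + 1) ≤
        C * (T / N) ^ (p + 1 / 2) := by
  have hn1 : (1:ℝ) ≤ n := by exact_mod_cast hn
  set K : ℝ := (n.factorial : ℝ) + 1 with hK
  set C₁ : ℝ := Real.exp (Real.pi ^ 2 / 2) / Real.pi ^ 2 with hC₁
  set q : ℝ := 3/2 - p with hqdef
  have hq1 : 1 < q := by rw [hqdef]; linarith
  have hZsum : Summable (fun j : ℕ => ((j:ℝ) + 1) ^ (-q)) := aux_summable_Z hq1
  set Z : ℝ := ∑' j : ℕ, ((j:ℝ) + 1) ^ (-q) with hZ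
  have hKpos : 0 < K := by rw [hK]; positivity
  have hC₁pos : 0 < C₁ := by rw [hC₁]; positivity
  have hZpos : 0 < Z := by
    refine Summable.tsum_pos hZsum (fun j => by positivity) 0 (by positivity)
  refine ⟨K * C₁ * Z, by positivity, ?_⟩
  intro N hN v hv
  set h : ℝ := T / N with hh
  have hNpos : (0:ℝ) < N := by
    have : (0:ℕ) < N := by omega
    exact_mod_cast this
  have hhpos : 0 < h := div_pos hT hNpos
  have hTN : T = N * h := by rw [hh]; field_simp
  set a : ℝ := (n:ℝ) - p with ha
  have hapos : 0 < a := by rw [ha]; linarith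
  have han : a ≤ n := by rw [ha]; linarith
  have haq : q ≤ a + 1/2 := by rw [hqdef, ha]; linarith
  -- per-k bound
  have key : ∀ k, k < N - 1 →
      Summable (fun m : ℕ => v k (m+1)) ∧
      ∑' m : ℕ, v k (m+1) ≤ K * C₁ * ((N - 1 - k : ℕ) : ℝ) ^ (-q) * h ^ (p + 1/2) := by
    intro k hk
    set j : ℕ := N - 1 - k with hjdef
    have hj1 : 1 ≤ j := by omega
    have hj1' : (1:ℝ) ≤ (j:ℝ) := by exact_mod_cast hj1
    set s : ℝ := (j:ℝ) * h with hs
    have hspos : 0 < s := by rw [hs]; positivity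
    have hjcast : (j:ℝ) + ((k:ℝ) + 1) = (N:ℝ) := by
      have h5 : j + (k + 1) = N := by omega
      exact_mod_cast h5
    have hsT : T - ((k:ℝ) + 1) * h = s := by
      rw [hs, hTN, ← hjcast]; ring
    have hpt : ∀ m : ℕ, v k (m+1) ≤
        K * h ^ (n+1) * s ^ (-a) * Real.exp (-(lam (m+1) * s)) := by
      intro m
      obtain ⟨h0, h1⟩ := hv k (by omega) (m+1) (by omega)
      rw [hsT] at h1
      refine h1.trans ?_
      have h2 := aux_key_pt n hapos han (lam_nonneg (m+1)) hspos
      calc lam (m+1) ^ a * h ^ (n+1) * Real.exp (-2 * lam (m+1) * s)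
          = (lam (m+1) ^ a * Real.exp (-2 * lam (m+1) * s)) * h ^ (n+1) := by ring
        _ ≤ (K * s ^ (-a) * Real.exp (-(lam (m+1) * s))) * h ^ (n+1) := by
            apply mul_le_mul_of_nonneg_right _ (by positivity)
            rw [hK]; exact h2
        _ = K * h ^ (n+1) * s ^ (-a) * Real.exp (-(lam (m+1) * s)) := by ring
    have hsummB : Summable (fun m : ℕ =>
        K * h ^ (n+1) * s ^ (-a) * Real.exp (-(lam (m+1) * s))) := by
      have := (aux_summable_exp_lam hspos).mul_left (K * h ^ (n+1) * s ^ (-a))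
      simpa [mul_assoc] using this
    have hvnn : ∀ m : ℕ, 0 ≤ v k (m+1) := fun m =>
      (hv k (by omega) (m+1) (by omega)).1
    have hsummV : Summable (fun m : ℕ => v k (m+1)) :=
      Summable.of_nonneg_of_le hvnn hpt hsummB
    refine ⟨hsummV, ?_⟩
    have s1 : s ^ (-a) * s ^ (-(1/2) : ℝ) = s ^ (-(a + 1/2)) := by
      rw [← Real.rpow_add hspos]
      congr 1; ring
    have s2 : s ^ (-(a + 1/2)) = (j:ℝ) ^ (-(a + 1/2)) * h ^ (-(a + 1/2)) := by
      rw [hs, Real.mul_rpow (by positivity) hhpos.le]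
    have s3 : h ^ (n+1) * h ^ (-(a + 1/2)) = h ^ (p + 1/2) := by
      rw [← Real.rpow_natCast h (n+1), ← Real.rpow_add hhpos]
      congr 1
      rw [ha]; push_cast; ring
    have jle : (j:ℝ) ^ (-(a + 1/2)) ≤ (j:ℝ) ^ (-q) :=
      Real.rpow_le_rpow_of_exponent_le hj1' (by linarith)
    calc ∑' m : ℕ, v k (m+1)
        ≤ ∑' m : ℕ, K * h ^ (n+1) * s ^ (-a) * Real.exp (-(lam (m+1) * s)) :=
          Summable.tsum_le_tsum hpt hsummV hsummB
      _ = K * h ^ (n+1) * s ^ (-a) * ∑' m : ℕ, Real.exp (-(lam (m+1) * s)) := by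
          rw [← tsum_mul_left]
      _ ≤ K * h ^ (n+1) * s ^ (-a) * (C₁ * s ^ (-(1/2) : ℝ)) := by
          apply mul_le_mul_of_nonneg_left _ (by positivity)
          rw [hC₁]; exact aux_spec_sum hspos
      _ = K * C₁ * (s ^ (-a) * s ^ (-(1/2) : ℝ)) * h ^ (n+1) := by ring
      _ = K * C₁ * ((j:ℝ) ^ (-(a + 1/2)) * h ^ (-(a + 1/2))) * h ^ (n+1) := by
          rw [s1, s2]
      _ = K * C₁ * (j:ℝ) ^ (-(a + 1/2)) * (h ^ (n+1) * h ^ (-(a + 1/2))) := by ring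
      _ = K * C₁ * (j:ℝ) ^ (-(a + 1/2)) * h ^ (p + 1/2) := by rw [s3]
      _ ≤ K * C₁ * (j:ℝ) ^ (-q) * h ^ (p + 1/2) := by
          apply mul_le_mul_of_nonneg_right _ (by positivity)
          exact mul_le_mul_of_nonneg_left jle (by positivity)
  -- assemble
  have hsumm : ∀ k ∈ Finset.range (N-1), Summable (fun m : ℕ => v k (m+1)) :=
    fun k hk => (key k (Finset.mem_range.mp hk)).1
  rw [Summable.tsum_finsetSum (f := fun k m => v k (m+1)) hsumm]
  have hrefl : ∑ i ∈ Finset.range (N-1), ((i:ℝ) + 1) ^ (-q)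
      = ∑ k ∈ Finset.range (N-1), ((N - 1 - k : ℕ) : ℝ) ^ (-q) := by
    rw [← Finset.sum_range_reflect (fun i => ((i:ℝ) + 1) ^ (-q)) (N-1)]
    refine Finset.sum_congr rfl (fun k hk => ?_)
    have hk' : k < N - 1 := Finset.mem_range.mp hk
    have hcst : ((N - 1 - 1 - k : ℕ) : ℝ) + 1 = ((N - 1 - k : ℕ) : ℝ) := by
      have h1 : (N - 1 - 1 - k) + 1 = N - 1 - k := by omega
      exact_mod_cast h1
    rw [hcst]
  calc ∑ k ∈ Finset.range (N-1), ∑' m : ℕ, v k (m+1)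
      ≤ ∑ k ∈ Finset.range (N-1),
          K * C₁ * ((N - 1 - k : ℕ) : ℝ) ^ (-q) * h ^ (p + 1/2) :=
        Finset.sum_le_sum (fun k hk => (key k (Finset.mem_range.mp hk)).2)
    _ = (∑ k ∈ Finset.range (N-1), ((N - 1 - k : ℕ) : ℝ) ^ (-q)) *
          (K * C₁ * h ^ (p + 1/2)) := by
        rw [Finset.sum_mul]
        refine Finset.sum_congr rfl (fun k _ => by ring)
    _ ≤ Z * (K * C₁ * h ^ (p + 1/2)) := by
        apply mul_le_mul_of_nonneg_right _ (by positivity)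
        rw [← hrefl, hZ]
        exact Summable.sum_le_tsum (Finset.range (N-1)) (fun i _ => by positivity) hZsum
    _ = K * C₁ * Z * h ^ (p + 1/2) := by ring
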